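/- In the noisy-pair model with class transition matrix T (size c×c, c ≥ 2), the conditional probability that the noisy similarity label equals 1 given that the clean similarity label equals 1 satisfies T_{s,11} := P(H̄ = 1 | H = 1) = ‖T‖_Fro² / c, where ‖T‖_Fro² = Σ_{i,j} T_{ij}² is the squared Frobenius norm of T. -/

import Mathlib

/- The probability of an event `A` (on quadruples `(i₁, j₁, i₂, j₂)` of clean/noisy class
labels for two independent points) in the noisy-pair model with class transition matrix `T`
and uniform class priors: each quadruple has probability `(1/c²) · T i₁ j₁ · T i₂ j₂`. -/
open Classical in
noncomputable def noisyPairProb (c : ℕ) (T : Matrix (Fin c) (Fin c) ℝ)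
    (A : Fin c → Fin c → Fin c → Fin c → Prop) : ℝ :=
  ∑ i₁ : Fin c, ∑ j₁ : Fin c, ∑ i₂ : Fin c, ∑ j₂ : Fin c,
    if A i₁ j₁ i₂ j₂ then (1 / (c : ℝ) ^ 2) * T i₁ j₁ * T i₂ j₂ else 0

/-- In the noisy-pair model, `T_{s,11} = P(H̄ = 1 | H = 1) = ‖T‖_Fro² / c`. -/
theorem Ts11_eq_frobenius_div_c (c : ℕ) (hc : 2 ≤ c) (T : Matrix (Fin c) (Fin c) ℝ)
    (hpos : ∀ i j, 0 ≤ T i j) (hrow : ∀ i, ∑ j, T i j = 1) :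
    noisyPairProb c T (fun i₁ j₁ i₂ j₂ => i₁ = i₂ ∧ j₁ = j₂) /
        noisyPairProb c T (fun i₁ _ i₂ _ => i₁ = i₂) =
      (∑ i, ∑ j, (T i j) ^ 2) / (c : ℝ) := by
  have hc0 : (c:ℝ) ≠ 0 := by
    have : 0 < c := lt_of_lt_of_le (by norm_num) hc
    positivity
  have num : noisyPairProb c T (fun i₁ j₁ i₂ j₂ => i₁ = i₂ ∧ j₁ = j₂)
      = (1 / (c:ℝ)^2) * ∑ i, ∑ j, (T i j)^2 := by
    unfold noisyPairProb
    simp [ite_and, Finset.sum_ite_eq, Finset.mul_sum, sq, mul_assoc]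
  have den : noisyPairProb c T (fun i₁ _ i₂ _ => i₁ = i₂) = 1 / (c:ℝ) := by
    unfold noisyPairProb
    have : ∀ i₁ j₁ i₂ : Fin c, ∑ j₂ : Fin c,
        (if i₁ = i₂ then (1 / (c : ℝ) ^ 2) * T i₁ j₁ * T i₂ j₂ else 0)
        = if i₁ = i₂ then (1 / (c : ℝ) ^ 2) * T i₁ j₁ else 0 := by
      intro i₁ j₁ i₂
      by_cases h : i₁ = i₂ <;> simp [h, ← Finset.mul_sum, hrow]
    simp only [this, Finset.sum_ite_eq, Finset.mem_univ, if_true]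
    simp [← Finset.sum_mul, ← Finset.mul_sum, hrow, Finset.card_univ]
    field_simp
  rw [num, den]
  field_simp
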